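/- For all n ≥ 1: ∑_{k=1}^{n} (-1)^{k-1}·T(n,k)·k·((k-1)!)² = (-1)^{n-1}·G_{2n}, where T(n,k) are the central factorial numbers of the second kind and G_{2n} the unsigned Genocchi numbers. -/

import Mathlib

/-- Central factorial numbers of the second kind:
T(n,k) = T(n-1,k-1) + k² T(n-1,k), T(0,k)=[k=0], T(n,0)=[n=0]. -/
def centralFactorialT : ℕ → ℕ → ℕ
  | 0, 0 => 1
  | 0, _ + 1 => 0
  | _ + 1, 0 => 0
  | n + 1, k + 1 => centralFactorialT n k + (k + 1) ^ 2 * centralFactorialT n (k + 1)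

open PowerSeries in
/-- The exponential generating function 2z/(1+e^z) of the Genocchi numbers. -/
noncomputable def genocchiSeries : PowerSeries ℚ :=
  2 * PowerSeries.X * (1 + PowerSeries.exp ℚ)⁻¹

/-- The unsigned Genocchi numbers `G (2n)` : since
2z/(1+e^z) = z + ∑_{n≥1} (-1)^n G_{2n} z^{2n}/(2n)!, we recover
G_{2n} = (-1)^n (2n)! [z^{2n}] (2z/(1+e^z)); this also gives G 0 = 0. -/
noncomputable def genocchi (n : ℕ) : ℚ :=
  (-1) ^ n * (2 * n).factorial * PowerSeries.coeff (R := ℚ) (2 * n) genocchiSeries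

open PowerSeries

noncomputable section
namespace CFaux

def Eneg : PowerSeries ℚ := PowerSeries.evalNegHom (PowerSeries.exp ℚ)
def U : PowerSeries ℚ := PowerSeries.exp ℚ + Eneg - 2

lemma coeff_E (n : ℕ) : coeff (R := ℚ) n (exp ℚ) = 1 / n.factorial := by
  simp [coeff_exp]

lemma coeff_Eneg (n : ℕ) : coeff (R := ℚ) n Eneg = (-1)^n / n.factorial := by
  simp [Eneg, evalNegHom, coeff_rescale, coeff_exp]
  ring

lemma deriv_E : d⁄dX ℚ (exp ℚ) = exp ℚ := by
  ext n
  rw [coeff_derivative, coeff_E, coeff_E, Nat.factorial_succ]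
  push_cast
  field_simp
lemma deriv_Eneg : d⁄dX ℚ Eneg = -Eneg := by
  ext n
  rw [coeff_derivative, coeff_Eneg, map_neg, coeff_Eneg, Nat.factorial_succ, pow_succ]
  have h1 : ((n+1 : ℕ) : ℚ) ≠ 0 := by positivity
  have h2 : ((n.factorial : ℚ)) ≠ 0 := by positivity
  field_simp
  push_cast
  ring

lemma EEneg : exp ℚ * Eneg = 1 := exp_mul_exp_neg_eq_one

lemma two_eq : (2 : ℚ⟦X⟧) = (C (R := ℚ)) 2 := (map_ofNat ((C (R := ℚ))) 2).symm

lemma dU : d⁄dX ℚ U = exp ℚ - Eneg := by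
  rw [U, two_eq, map_sub, map_add, deriv_E, deriv_Eneg, derivative_C]
  ring

lemma ddU : d⁄dX ℚ (exp ℚ - Eneg) = U + 2 := by
  simp [U, deriv_E, deriv_Eneg]

lemma dU_sq : (exp ℚ - Eneg)^2 = U^2 + 4*U := by
  have h := EEneg
  unfold U
  linear_combination (-4:ℚ⟦X⟧) * h

lemma X2_dvd_U : (X : ℚ⟦X⟧)^2 ∣ U := by
  rw [PowerSeries.X_pow_dvd_iff]
  intro m hm
  rw [U, two_eq]
  interval_cases m <;>
    simp [coeff_E, coeff_Eneg, map_sub, map_add, coeff_C] <;> norm_num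

lemma coeff_U_pow_eq_zero {m k : ℕ} (h : m < 2*k) : coeff (R := ℚ) m (U^k) = 0 := by
  have : (X : ℚ⟦X⟧)^(2*k) ∣ U^k := by
    rw [pow_mul]
    exact pow_dvd_pow_of_dvd X2_dvd_U k
  exact (PowerSeries.X_pow_dvd_iff.mp this) m h

lemma deriv_pow (k : ℕ) : d⁄dX ℚ (U^(k+1)) = ((k:ℚ⟦X⟧)+1) * U^k * (exp ℚ - Eneg) := by
  rw [Derivation.leibniz_pow, dU, Nat.add_sub_cancel]
  simp only [smul_eq_mul, nsmul_eq_mul]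
  push_cast
  ring

lemma dd_pow (k : ℕ) : d⁄dX ℚ (d⁄dX ℚ (U^(k+1))) =
    ((k:ℚ⟦X⟧)+1)^2 * U^(k+1) + ((2*k+2)*(2*k+1) : ℚ⟦X⟧) * U^k := by
  rw [deriv_pow]
  rw [Derivation.leibniz, Derivation.leibniz, ddU]
  simp only [smul_eq_mul, map_add, Derivation.map_natCast, Derivation.map_one_eq_zero,
    add_zero, zero_add, mul_zero, zero_mul]
  cases k with
  | zero => simp
  | succ m =>
      rw [deriv_pow m]
      have hsq : (exp ℚ - Eneg) * (exp ℚ - Eneg) = U^2 + 4*U := by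
        rw [← pow_two]; exact dU_sq
      push_cast
      linear_combination ((m:ℚ⟦X⟧) + 2) * ((m:ℚ⟦X⟧)+1) * U^m * hsq
lemma constU : constantCoeff (R := ℚ) U = 0 := by
  have h1 : constantCoeff (R := ℚ) (exp ℚ) = 1 := by
    rw [← coeff_zero_eq_constantCoeff_apply, coeff_E]; simp
  have h2 : constantCoeff (R := ℚ) Eneg = 1 := by
    rw [← coeff_zero_eq_constantCoeff_apply, coeff_Eneg]; simp
  rw [U, map_sub, map_add, h1, h2, map_ofNat]
  norm_num

lemma Tcoeff (T : ℕ → ℕ → ℕ)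
    (hT00 : T 0 0 = 1) (hT0 : ∀ k, T 0 (k+1) = 0) (hTn : ∀ n, T (n+1) 0 = 0)
    (hTrec : ∀ n k, T (n+1) (k+1) = T n k + (k+1)^2 * T n (k+1)) :
    ∀ n k, (((2*k).factorial : ℚ)) * T n k = ((2*n).factorial : ℚ) * coeff (R := ℚ) (2*n) (U^k) := by
  intro n
  induction n with
  | zero =>
    intro k
    cases k with
    | zero => simp [hT00]
    | succ m =>
      rw [hT0, coeff_zero_eq_constantCoeff_apply, map_pow, constU]
      simp
  | succ n ih =>
    intro k
    cases k with
    | zero =>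
      rw [hTn]
      simp [coeff_one]
    | succ m =>
      have h1 := ih (m+1)
      have h2 := ih m
      have h3 : coeff (R := ℚ) (2*n) (d⁄dX ℚ (d⁄dX ℚ (U^(m+1)))) =
          ((2*n+1)*(2*n+2) : ℚ) * coeff (R := ℚ) (2*(n+1)) (U^(m+1)) := by
        rw [coeff_derivative, coeff_derivative,
          show 2*n+1+1 = 2*(n+1) from by ring]
        push_cast
        ring
      have h4 : coeff (R := ℚ) (2*n) (d⁄dX ℚ (d⁄dX ℚ (U^(m+1)))) =
          ((m:ℚ)+1)^2 * coeff (R := ℚ) (2*n) (U^(m+1))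
          + ((2*m+2)*(2*m+1) : ℚ) * coeff (R := ℚ) (2*n) (U^m) := by
        have c1 : (C (R := ℚ)) (((m:ℚ)+1)^2) = ((m:ℚ⟦X⟧)+1)^2 := by
          simp [map_pow, map_add, map_natCast]
        have c2 : (C (R := ℚ)) (((2*(m:ℚ)+2)*(2*(m:ℚ)+1))) = (2*(m:ℚ⟦X⟧)+2)*(2*(m:ℚ⟦X⟧)+1) := by
          simp [map_mul, map_add, map_ofNat, map_natCast]
        rw [dd_pow, map_add]
        rw [show ((2*(m:ℕ)+2)*(2*(m:ℕ)+1) : ℚ⟦X⟧) = (2*(m:ℚ⟦X⟧)+2)*(2*(m:ℚ⟦X⟧)+1) from by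
          push_cast; ring, ← c2, ← c1]
        rw [coeff_C_mul, coeff_C_mul]
      have hf1 : ((2*(m+1)).factorial : ℚ)
          = (2*(m:ℚ)+2)*(2*(m:ℚ)+1)*((2*m).factorial : ℚ) := by
        rw [show 2*(m+1) = (2*m+1)+1 from by ring, Nat.factorial_succ, Nat.factorial_succ]
        push_cast
        ring
      have hf2 : ((2*(n+1)).factorial : ℚ)
          = (2*(n:ℚ)+2)*(2*(n:ℚ)+1)*((2*n).factorial : ℚ) := by
        rw [show 2*(n+1) = (2*n+1)+1 from by ring, Nat.factorial_succ, Nat.factorial_succ]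
        push_cast
        ring
      rw [hTrec]
      push_cast [hf1, hf2] at *
      linear_combination ((m:ℚ)+1)^2 * h1 + ((2*(m:ℚ)+2)*(2*(m:ℚ)+1)) * h2
        + ((2*n).factorial : ℚ) * h3 - ((2*n).factorial : ℚ) * h4

def aseq (k : ℕ) : ℚ := (-1)^(k-1) * (k.factorial : ℚ)^2 / (k * (2*k).factorial)

lemma aseq_one : aseq 1 = 1/2 := by norm_num [aseq]

lemma aseq_rec {k : ℕ} (hk : 1 ≤ k) :
    (4*(k:ℚ)+2) * aseq (k+1) = -((k:ℚ) * aseq k) := by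
  obtain ⟨j, rfl⟩ : ∃ j, k = j+1 := ⟨k-1, (Nat.succ_pred_eq_of_pos hk).symm⟩
  unfold aseq
  have e1 : (j+1+1).factorial = (j+2) * (j+1).factorial := rfl
  have e2 : 2*(j+1+1) = (2*(j+1)+1)+1 := by ring
  have e3 : ((2*(j+1)+1)+1).factorial
      = ((2*(j+1)+2) * (2*(j+1)+1)) * (2*(j+1)).factorial := by
    rw [Nat.factorial_succ, Nat.factorial_succ]
    ring
  rw [e1, e2, e3]
  simp only [Nat.add_sub_cancel]
  have hj1 : ((j:ℚ)+1) ≠ 0 := by positivity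
  have hj2 : ((j:ℚ)+2) ≠ 0 := by positivity
  have hf1 : (((j+1).factorial : ℚ)) ≠ 0 := by positivity
  have hf2 : (((2*(j+1)).factorial : ℚ)) ≠ 0 := by positivity
  have h21 : (2*((j:ℚ)+1)+1) ≠ 0 := by positivity
  push_cast
  rw [pow_succ]
  field_simp
  ring

def Fser (N : ℕ) : ℚ⟦X⟧ := ∑ k ∈ Finset.Icc 1 N, (C (R := ℚ)) (aseq k) * U^k

lemma F_ode : ∀ N, 1 ≤ N → (exp ℚ - Eneg) * d⁄dX ℚ (Fser N) =
    2 * Fser N + U + (C (R := ℚ)) ((N:ℚ) * aseq N) * U^(N+1) := by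
  intro N hN
  induction N, hN using Nat.le_induction with
  | base =>
    have : Fser 1 = (C (R := ℚ)) (aseq 1) * U^1 := by
      simp [Fser]
    rw [this]
    rw [Derivation.leibniz, derivative_C, smul_eq_mul, smul_eq_mul, mul_zero, add_zero]
    rw [pow_one, dU]
    simp only [aseq_one, Nat.cast_one, one_mul]
    have hsq := dU_sq
    have : (C (R := ℚ)) ((1:ℚ)/2) * (2 : ℚ⟦X⟧) = 1 := by
      rw [two_eq, ← map_mul]
      norm_num
    linear_combination (C (R := ℚ)) ((1:ℚ)/2) * hsq + U * this
  | succ N hN ih =>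
    have hs : Fser (N+1) = Fser N + (C (R := ℚ)) (aseq (N+1)) * U^(N+1) := by
      rw [Fser, Fser, Finset.sum_Icc_succ_top (by omega)]
    have hrC : (4*(N:ℚ⟦X⟧)+2) * (C (R := ℚ)) (aseq (N+1)) = -((N:ℚ⟦X⟧) * (C (R := ℚ)) (aseq N)) := by
      have h := congrArg ((C (R := ℚ))) (aseq_rec hN)
      simp only [map_mul, map_add, map_neg, map_ofNat, map_natCast] at h
      exact h
    have hsqN : U^N * (exp ℚ - Eneg)^2 = U^(N+2) + 4*U^(N+1) := by
      rw [dU_sq]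
      ring
    rw [hs, map_add, Derivation.leibniz, derivative_C, smul_eq_mul, smul_eq_mul,
      mul_zero, add_zero, deriv_pow]
    simp only [map_mul, map_add, map_natCast, map_one] at ih ⊢
    push_cast
    linear_combination ih + (C (R := ℚ)) (aseq (N+1)) * ((N:ℚ⟦X⟧)+1) * hsqN + U^(N+1) * hrC

lemma onePlusE_const : constantCoeff (R := ℚ) (1 + exp ℚ) = (2:ℚ) := by
  rw [map_add, map_one, constantCoeff_exp]
  norm_num

lemma inv_onePlusE : (1 + exp ℚ)⁻¹ * (1 + exp ℚ) = 1 :=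
  PowerSeries.inv_mul_cancel _ (by rw [onePlusE_const]; norm_num)

lemma tId : (X - genocchiSeries) * (1 + exp ℚ) = X * (exp ℚ - 1) := by
  rw [genocchiSeries]
  have h := inv_onePlusE
  linear_combination (-2 * (X:ℚ⟦X⟧)) * h

lemma t_ode : (exp ℚ - Eneg) * d⁄dX ℚ (X - genocchiSeries) =
    2 * (X - genocchiSeries) + U := by
  have hI := tId
  have hd : (1 - d⁄dX ℚ genocchiSeries) * (1 + exp ℚ) + (X - genocchiSeries) * exp ℚ
      = (exp ℚ - 1) + X * exp ℚ := by
    have h := congrArg (d⁄dX ℚ) hI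
    simp only [Derivation.leibniz, smul_eq_mul, map_add, map_sub, deriv_E, derivative_X,
      Derivation.map_one_eq_zero] at h
    linear_combination h
  have hE := EEneg
  have hc : exp ℚ * (1 + exp ℚ) ≠ 0 := by
    intro h
    have := congrArg (constantCoeff (R := ℚ)) h
    rw [map_mul, constantCoeff_exp, onePlusE_const, map_zero] at this
    norm_num at this
  apply mul_right_cancel₀ hc
  rw [U, map_sub, derivative_X]
  linear_combination ((exp ℚ)^2-1) * hd - ((exp ℚ)^2 + exp ℚ) * hI
    - ((1 - d⁄dX ℚ genocchiSeries) * (1 + exp ℚ) + (1 + exp ℚ)) * hE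

lemma coeff0_EmEn : coeff (R := ℚ) 0 (exp ℚ - Eneg) = 0 := by
  rw [map_sub, coeff_E, coeff_Eneg]
  norm_num

lemma coeff1_EmEn : coeff (R := ℚ) 1 (exp ℚ - Eneg) = 2 := by
  rw [map_sub, coeff_E, coeff_Eneg]
  norm_num

lemma coeff_g0 : coeff (R := ℚ) 0 genocchiSeries = 0 := by
  rw [genocchiSeries, coeff_zero_eq_constantCoeff_apply, map_mul, map_mul,
    constantCoeff_X]
  ring

lemma coeff_g1 : coeff (R := ℚ) 1 genocchiSeries = 1 := by
  have : genocchiSeries = X * (2 * (1 + exp ℚ)⁻¹) := by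
    rw [genocchiSeries]; ring
  rw [this, coeff_succ_X_mul 0,
    coeff_zero_eq_constantCoeff_apply, map_mul, map_ofNat, PowerSeries.constantCoeff_inv,
    onePlusE_const]
  norm_num

lemma coeff_F_low {m N : ℕ} (hm : m < 2) : coeff (R := ℚ) m (Fser N) = 0 := by
  rw [Fser, map_sum]
  apply Finset.sum_eq_zero
  intro k hk
  rw [coeff_C_mul, coeff_U_pow_eq_zero, mul_zero]
  have : 1 ≤ k := (Finset.mem_Icc.mp hk).1
  omega

lemma key (n : ℕ) (hn : 1 ≤ n) : ∀ m, m ≤ 2*n+1 →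
    coeff (R := ℚ) m (X - genocchiSeries - Fser n) = 0 := by
  have hode : (exp ℚ - Eneg) * d⁄dX ℚ (X - genocchiSeries - Fser n)
      = 2 * (X - genocchiSeries - Fser n) - (C (R := ℚ)) ((n:ℚ)*aseq n) * U^(n+1) := by
    have h1 := t_ode
    have h2 := F_ode n hn
    rw [map_sub]
    linear_combination h1 - h2
  intro m
  induction m using Nat.strong_induction_on with
  | _ m ih =>
    intro hm
    match m with
    | 0 =>
      rw [map_sub, map_sub, coeff_g0, coeff_F_low (by norm_num)]
      simp
    | 1 =>
      rw [map_sub, map_sub, coeff_g1, coeff_F_low (by norm_num), coeff_X]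
      norm_num
    | (j+2) =>
      have hc := congrArg (coeff (R := ℚ) (j+2)) hode
      rw [coeff_mul] at hc
      have hsum : ∑ p ∈ Finset.HasAntidiagonal.antidiagonal (j+2),
          coeff (R := ℚ) p.1 (exp ℚ - Eneg) * coeff (R := ℚ) p.2 (d⁄dX ℚ (X - genocchiSeries - Fser n))
          = ((j:ℚ)+2) * 2 * coeff (R := ℚ) (j+2) (X - genocchiSeries - Fser n) := by
        rw [Finset.sum_eq_single_of_mem (1,j+1) (by rw [Finset.HasAntidiagonal.mem_antidiagonal]; omega)]
        · rw [coeff1_EmEn, coeff_derivative]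
          push_cast
          ring
        · rintro ⟨i, l⟩ hp hne
          rw [Finset.HasAntidiagonal.mem_antidiagonal] at hp
          match i with
          | 0 => rw [coeff0_EmEn, zero_mul]
          | 1 => exact absurd (by simp at hp ⊢; omega : ((1:ℕ),l) = (1,j+1)) hne
          | (i+2) =>
            rw [coeff_derivative, ih (l+1) (by omega) (by omega)]
            ring
      have hU : coeff (R := ℚ) (j+2) (U^(n+1)) = 0 := coeff_U_pow_eq_zero (by omega)
      rw [hsum] at hc
      have hrhs : coeff (R := ℚ) (j+2) (2 * (X - genocchiSeries - Fser n)
            - (C (R := ℚ)) ((n:ℚ)*aseq n) * U^(n+1))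
          = 2 * coeff (R := ℚ) (j+2) (X - genocchiSeries - Fser n) := by
        simp only [map_sub, two_eq, coeff_C_mul, hU, mul_zero, sub_zero]
      rw [hrhs] at hc
      have h3 : ((j:ℚ)+1) * coeff (R := ℚ) (j+2) (X - genocchiSeries - Fser n) = 0 := by
        linear_combination hc / 2
      exact (mul_eq_zero.mp h3).resolve_left (by positivity)

end CFaux
end

theorem sum_centralFactorialT_genocchi (n : ℕ) (hn : 1 ≤ n) :
    ∑ k ∈ Finset.Icc 1 n, (-1 : ℚ) ^ (k - 1) * centralFactorialT n k * k *
        ((k - 1).factorial : ℚ) ^ 2 =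
      (-1) ^ (n - 1) * genocchi n := by
  classical
  open CFaux in
  have hT := Tcoeff centralFactorialT rfl (fun k => rfl) (fun n => rfl)
    (fun n k => rfl)
  have hF : ((2*n).factorial : ℚ) * coeff (R := ℚ) (2*n) (CFaux.Fser n)
      = ∑ k ∈ Finset.Icc 1 n, (-1 : ℚ) ^ (k - 1) * centralFactorialT n k * k *
        ((k - 1).factorial : ℚ) ^ 2 := by
    rw [CFaux.Fser, map_sum, Finset.mul_sum]
    apply Finset.sum_congr rfl
    intro k hk
    obtain ⟨j, rfl⟩ : ∃ j, k = j+1 :=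
      ⟨k-1, (Nat.succ_pred_eq_of_pos (Finset.mem_Icc.mp hk).1).symm⟩
    rw [coeff_C_mul]
    have := hT n (j+1)
    calc ((2*n).factorial : ℚ) * (CFaux.aseq (j+1) * coeff (R := ℚ) (2*n) (CFaux.U^(j+1)))
        = CFaux.aseq (j+1) * (((2*n).factorial : ℚ) * coeff (R := ℚ) (2*n) (CFaux.U^(j+1))) := by ring
      _ = CFaux.aseq (j+1) * (((2*(j+1)).factorial : ℚ) * centralFactorialT n (j+1)) := by
          rw [← this]
      _ = (-1 : ℚ) ^ (j+1-1) * centralFactorialT n (j+1) * (j+1) *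
          (((j+1-1).factorial : ℚ))^2 := by
          rw [CFaux.aseq]
          simp only [Nat.add_sub_cancel]
          have h1 : (((j+1).factorial : ℚ)) = ((j:ℚ)+1) * (j.factorial : ℚ) := by
            rw [Nat.factorial_succ]; push_cast; ring
          have h2 : (((2*(j+1)).factorial : ℚ)) ≠ 0 := by positivity
          have h3 : ((j:ℚ)+1) ≠ 0 := by positivity
          field_simp [h1]
          push_cast [Nat.factorial_succ]
          ring
      _ = (-1 : ℚ) ^ (j+1-1) * centralFactorialT n (j+1) * ((j+1 : ℕ) : ℚ) *
          (((j+1-1).factorial : ℚ))^2 := by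
          push_cast
          ring
  have hkey := CFaux.key n hn (2*n) (by omega)
  have hX : coeff (R := ℚ) (2*n) (X : ℚ⟦X⟧) = 0 := by
    rw [coeff_X]
    simp only [ite_eq_right_iff]
    intro h
    omega
  rw [map_sub, map_sub, hX, zero_sub, sub_eq_zero] at hkey
  rw [← hF, ← hkey]
  rw [genocchi]
  obtain ⟨m, rfl⟩ : ∃ m, n = m+1 := ⟨n-1, (Nat.succ_pred_eq_of_pos hn).symm⟩
  simp only [Nat.add_sub_cancel]
  have hsq : ((-1:ℚ))^m * (-1)^m = 1 := by
    rw [← pow_add, ← two_mul, pow_mul]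
    norm_num
  linear_combination (((2*(m+1)).factorial : ℚ)
    * coeff (R := ℚ) (2*(m+1)) genocchiSeries) * hsq
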